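/- Let v, u, w be vector fields on a manifold M satisfying the sl(2,R) relations [v,u] = −2v, [w,u] = 2w, [v,w] = u, and let these act on functions as derivations. Define the bracket {f,g} = (w∧v)(df∧dg) + f·u(g) − g·u(f) = w(f)v(g) − v(f)w(g) + f·u(g) − g·u(f) on C^∞(M). Then this bracket is antisymmetric and satisfies the Jacobi identity {f,{g,h}} + {h,{f,g}} + {g,{h,f}} = 0, i.e., (E,B) = (w∧v, u) defines a Jacobi structure on M. -/
import Mathlib


/- STATEMENT 14: if v, u, w are vector fields (derivations on C^∞(M)) with
[v,u] = −2v, [w,u] = 2w, [v,w] = u, then the bracket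
  {f,g} = w(f)v(g) − v(f)w(g) + f·u(g) − g·u(f)
is antisymmetric and satisfies the Jacobi identity, i.e. (E,B) = (w∧v, u)
defines a Jacobi structure on M.

C^∞(M) is modelled as a commutative ℝ-algebra A, vector fields as
derivations of A. -/

/-- The Jacobi bracket associated to the pair (E,B) = (w∧v, u). -/
def jacobiBr {A : Type*} [CommRing A] [Algebra ℝ A]
    (v u w : Derivation ℝ A A) (f g : A) : A :=
  w f * v g - v f * w g + f * u g - g * u f

theorem sl2_jacobi_structure
    {A : Type*} [CommRing A] [Algebra ℝ A]
    (v u w : Derivation ℝ A A)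
    (hvu : ⁅v, u⁆ = -((2 : ℝ) • v))
    (hwu : ⁅w, u⁆ = (2 : ℝ) • w)
    (hvw : ⁅v, w⁆ = u) :
    (∀ f g : A, jacobiBr v u w f g = -jacobiBr v u w g f) ∧
    (∀ f g h : A,
      jacobiBr v u w f (jacobiBr v u w g h)
        + jacobiBr v u w h (jacobiBr v u w f g)
        + jacobiBr v u w g (jacobiBr v u w h f) = 0) := by
  have hv : ∀ f : A, v (u f) = u (v f) - (v f + v f) := by
    intro f
    have := congrArg (fun D : Derivation ℝ A A => D f) hvu
    simp only [Derivation.commutator_apply, Derivation.neg_apply,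
      Derivation.smul_apply, Derivation.add_apply, two_smul] at this
    linear_combination this
  have hw : ∀ f : A, w (u f) = u (w f) + (w f + w f) := by
    intro f
    have := congrArg (fun D : Derivation ℝ A A => D f) hwu
    simp only [Derivation.commutator_apply, Derivation.neg_apply,
      Derivation.smul_apply, Derivation.add_apply, two_smul] at this
    linear_combination this
  have hu : ∀ f : A, v (w f) = w (v f) + u f := by
    intro f
    have := congrArg (fun D : Derivation ℝ A A => D f) hvw
    simp only [Derivation.commutator_apply] at this
    linear_combination this
  constructor
  · intro f g
    simp only [jacobiBr]
    ring
  · intro f g h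
    simp only [jacobiBr, map_add, map_sub, Derivation.leibniz, smul_eq_mul,
      hv, hw, hu]
    ring
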